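/- (Least Action Principle) Fix an instruction field I and V ⊆ ℤ^d. If α is an acceptable sequence of topplings that stabilizes (η,h) in V, then m_{V,η,h}(x) ≤ m_α(x) for every x ∈ ℤ^d. -/

import Mathlib

open scoped ENNReal NNReal
open MeasureTheory

namespace ARW

/-- A site of the lattice `ℤ^d`. -/
abbrev Site (d : ℕ) := Fin d → ℤ

/-- The set `ℕ_𝔰 = ℕ ∪ {𝔰}` of possible values at a site. -/
inductive NS where
  | nat : ℕ → NS
  | s : NS
deriving DecidableEq

/-- Rank function realizing the total order `0 < 𝔰 < 1 < 2 < ⋯`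
(`𝔰` is placed at `1/2`). -/
def NS.val : NS → ℚ
  | .nat n => n
  | .s => 1/2

instance : LE NS := ⟨fun a b => a.val ≤ b.val⟩
instance : LT NS := ⟨fun a b => a.val < b.val⟩

/-- Remove one particle: `n − 1`, with `𝔰 − 1 = 0`. -/
def NS.dec : NS → NS
  | .nat 0 => .nat 0
  | .nat (n+1) => .nat n
  | .s => .nat 0

/-- Add one particle: `n + 1`, with `𝔰 + 1 = 2`. -/
def NS.inc : NS → NS
  | .nat n => .nat (n+1)
  | .s => .nat 2

/-- Multiplication by `𝔰`: `n·𝔰 = n` for `n ≥ 2`, `1·𝔰 = 𝔰`, `𝔰·𝔰 = 𝔰`. -/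
def NS.mulS : NS → NS
  | .nat 0 => .nat 0
  | .nat 1 => .s
  | .nat (n+2) => .nat (n+2)
  | .s => .s

/-- A configuration of the ARW. -/
abbrev Config (d : ℕ) := Site d → NS

/-- An odometer. -/
abbrev Odom (d : ℕ) := Site d → ℕ

/-- An instruction: either a sleep instruction `τ_{x𝔰}`, or a move instruction
`τ_{xy}` recorded through the displacement `z = y − x ≠ 0`. -/
inductive Instr (d : ℕ) where
  | sleep : Instr d
  | move : (z : Site d) → z ≠ 0 → Instr d

/-- Applying an instruction at site `x` to a configuration: `τ_{x𝔰}` replaces `η(x)` by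
`η(x)·𝔰`; `τ_{xy}` (with `y = x + z`) decreases `η(x)` by one and increases `η(y)` by one. -/
def applyInstr {d : ℕ} (x : Site d) (ι : Instr d) (η : Config d) : Config d :=
  match ι with
  | .sleep => Function.update η x (η x).mulS
  | .move z _ => fun w =>
      if w = x then (η x).dec
      else if w = x + z then (η (x + z)).inc
      else η w

/-- A field of instructions `(τ^{x,j})_{x ∈ ℤ^d, j ∈ ℕ}`. -/
abbrev InstrField (d : ℕ) := Site d → ℕ → Instr d

/-- Toppling site `x`: `Φ_x(η,h) = (τ^{x,h(x)+1} η, h + δ_x)`. -/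
def topple {d : ℕ} (I : InstrField d) (x : Site d) (s : Config d × Odom d) :
    Config d × Odom d :=
  (applyInstr x (I x (s.2 x + 1)) s.1, Function.update s.2 x (s.2 x + 1))

/-- `Φ_α` for a finite sequence `α = (x_1, …, x_k)` of sites (`x_1` acts first). -/
def toppleSeq {d : ℕ} (I : InstrField d) :
    List (Site d) → Config d × Odom d → Config d × Odom d
  | [], s => s
  | x :: α, s => toppleSeq I α (topple I x s)

/-- Site `x` is unstable for `η` if `η(x) ≥ 1`. -/
def Unstable {d : ℕ} (η : Config d) (x : Site d) : Prop := NS.nat 1 ≤ η x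

/-- Toppling `x` is acceptable for `η` if `η(x) ≠ 0`. -/
def AcceptableAt {d : ℕ} (η : Config d) (x : Site d) : Prop := η x ≠ NS.nat 0

/-- `α` is a legal sequence of topplings for `(η,h)`: each successive toppling is legal. -/
inductive LegalSeq {d : ℕ} (I : InstrField d) : List (Site d) → Config d × Odom d → Prop
  | nil (s : Config d × Odom d) : LegalSeq I [] s
  | cons {x : Site d} {α : List (Site d)} {s : Config d × Odom d} :
      Unstable s.1 x → LegalSeq I α (topple I x s) → LegalSeq I (x :: α) s

/-- `α` is an acceptable sequence of topplings for `(η,h)`. -/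
inductive AcceptableSeq {d : ℕ} (I : InstrField d) : List (Site d) → Config d × Odom d → Prop
  | nil (s : Config d × Odom d) : AcceptableSeq I [] s
  | cons {x : Site d} {α : List (Site d)} {s : Config d × Odom d} :
      AcceptableAt s.1 x → AcceptableSeq I α (topple I x s) → AcceptableSeq I (x :: α) s

/-- `η` is stable in `V`: every `x ∈ V` is stable for `η`. -/
def StableIn {d : ℕ} (η : Config d) (V : Set (Site d)) : Prop :=
  ∀ x ∈ V, ¬ Unstable η x

/-- `m_{V,η,h}(x) = sup { m_β(x) : β ⊆ V legal for (η,h) }`, as an element of `ℕ∞`. -/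
noncomputable def mV {d : ℕ} (I : InstrField d) (V : Set (Site d)) (η : Config d) (h : Odom d)
    (x : Site d) : ℕ∞ :=
  ⨆ (β : List (Site d)) (_ : (∀ y ∈ β, y ∈ V) ∧ LegalSeq I β (η, h)), (β.count x : ℕ∞)

/-- `m_{η,h} = m_{ℤ^d,η,h}`. -/
noncomputable def mFull {d : ℕ} (I : InstrField d) (η : Config d) (h : Odom d) :
    Site d → ℕ∞ :=
  mV I Set.univ η h

/-- The zero odometer. -/
def zeroOdom (d : ℕ) : Odom d := fun _ => 0

/-- `η` is `I`-stabilizable: `m_{η;I}(x) < ∞` for every `x`. -/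
def Stabilizable {d : ℕ} (I : InstrField d) (η : Config d) : Prop :=
  ∀ x : Site d, mFull I η (zeroOdom d) x < ⊤

/-- `η` is `I`-explosive: `m_{η;I}(x) = ∞` for every `x`. -/
def Explosive {d : ℕ} (I : InstrField d) (η : Config d) : Prop :=
  ∀ x : Site d, mFull I η (zeroOdom d) x = ⊤


section LAP

variable {d : ℕ} {I : InstrField d}

lemma NS.le_def {a b : NS} : a ≤ b ↔ a.val ≤ b.val := Iff.rfl

lemma NS.inc_ne_zero (v : NS) : v.inc ≠ NS.nat 0 := by
  cases v <;> simp [NS.inc]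

lemma NS.one_le_inc (v : NS) : NS.nat 1 ≤ v.inc := by
  cases v with
  | nat n =>
    rw [NS.inc, NS.le_def]
    show (1 : ℚ) ≤ ((n + 1 : ℕ) : ℚ)
    exact_mod_cast Nat.succ_le_succ (Nat.zero_le n)
  | s => rw [NS.inc, NS.le_def]; norm_num [NS.val]

lemma unstable_ne_zero {η : Config d} {x : Site d} (h : Unstable η x) : η x ≠ NS.nat 0 := by
  intro e
  rw [Unstable, e, NS.le_def] at h
  norm_num [NS.val] at h

lemma NS.dec_inc {v : NS} (hv : v ≠ NS.nat 0) : v.inc.dec = v.dec.inc := by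
  cases v with
  | nat n => cases n with
    | zero => exact absurd rfl hv
    | succ m => rfl
  | s => rfl

lemma NS.mulS_inc {v : NS} (hv : v ≠ NS.nat 0) : v.inc.mulS = v.mulS.inc := by
  cases v with
  | nat n => cases n with
    | zero => exact absurd rfl hv
    | succ m => cases m with
      | zero => rfl
      | succ k => rfl
  | s => rfl

lemma applyInstr_sleep_apply {x w : Site d} (η : Config d) :
    applyInstr x .sleep η w = if w = x then (η x).mulS else η w :=
  Function.update_apply η x _ w

lemma applyInstr_move_apply {x w : Site d} {z : Site d} {hz : z ≠ 0} (η : Config d) :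
    applyInstr x (.move z hz) η w =
      if w = x then (η x).dec else if w = x + z then (η (x + z)).inc else η w := rfl

lemma applyInstr_comm {x y : Site d} (hxy : x ≠ y) (ι κ : Instr d) {η : Config d}
    (hx : η x ≠ NS.nat 0) (hy : η y ≠ NS.nat 0) :
    applyInstr x ι (applyInstr y κ η) = applyInstr y κ (applyInstr x ι η) := by
  cases ι <;> cases κ <;> funext w <;>
    simp only [applyInstr_sleep_apply, applyInstr_move_apply] <;>
    split_ifs <;> subst_vars <;>
    first
      | rfl
      | (exact absurd rfl hxy)
      | (exact absurd rfl (by assumption))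
      | exact NS.dec_inc hx
      | exact (NS.dec_inc hx).symm
      | exact NS.dec_inc hy
      | exact (NS.dec_inc hy).symm
      | exact NS.mulS_inc hx
      | exact (NS.mulS_inc hx).symm
      | exact NS.mulS_inc hy
      | exact (NS.mulS_inc hy).symm
      | tauto
      | (rename_i h; rw [h]; tauto)

lemma toppleSeq_append (l₁ l₂ : List (Site d)) (s : Config d × Odom d) :
    toppleSeq I (l₁ ++ l₂) s = toppleSeq I l₂ (toppleSeq I l₁ s) := by
  induction l₁ generalizing s with
  | nil => rfl
  | cons a l ih => simp [toppleSeq, ih]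

lemma topple_fst_of_ne {y x : Site d} (h : y ≠ x) (s : Config d × Odom d) :
    (topple I y s).1 x = s.1 x ∨ (topple I y s).1 x = (s.1 x).inc := by
  rw [topple]
  cases I y (s.2 y + 1) with
  | sleep => exact Or.inl (Function.update_of_ne (Ne.symm h) _ _)
  | move z hz =>
    simp only [applyInstr]
    by_cases hxy : x = y
    · exact absurd hxy.symm h
    · by_cases hxz : x = y + z
      · right; rw [if_neg hxy, if_pos hxz, hxz]
      · left; rw [if_neg hxy, if_neg hxz]

lemma topple_snd_of_ne {y x : Site d} (h : y ≠ x) (s : Config d × Odom d) :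
    (topple I y s).2 x = s.2 x := Function.update_of_ne (Ne.symm h) _ _

lemma unstable_topple {y x : Site d} (h : y ≠ x) {s : Config d × Odom d}
    (hu : Unstable s.1 x) : Unstable (topple I y s).1 x := by
  rcases topple_fst_of_ne (I := I) h s with h' | h' <;> rw [Unstable, h']
  · exact hu
  · exact NS.one_le_inc _

lemma ne_zero_topple {y x : Site d} (h : y ≠ x) {s : Config d × Odom d}
    (hn : s.1 x ≠ NS.nat 0) : (topple I y s).1 x ≠ NS.nat 0 := by
  rcases topple_fst_of_ne (I := I) h s with h' | h' <;> rw [h']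
  · exact hn
  · exact NS.inc_ne_zero _

lemma topple_comm {x y : Site d} (hxy : x ≠ y) {s : Config d × Odom d}
    (hx : s.1 x ≠ NS.nat 0) (hy : s.1 y ≠ NS.nat 0) :
    topple I x (topple I y s) = topple I y (topple I x s) := by
  have h2x : (topple I y s).2 x = s.2 x := topple_snd_of_ne (Ne.symm hxy) s
  have h2y : (topple I x s).2 y = s.2 y := topple_snd_of_ne hxy s
  apply Prod.ext
  · show applyInstr x (I x ((topple I y s).2 x + 1)) (topple I y s).1 =
      applyInstr y (I y ((topple I x s).2 y + 1)) (topple I x s).1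
    rw [h2x, h2y]
    exact applyInstr_comm hxy _ _ hx hy
  · show Function.update (topple I y s).2 x ((topple I y s).2 x + 1) =
      Function.update (topple I x s).2 y ((topple I x s).2 y + 1)
    rw [h2x, h2y]
    show Function.update (Function.update s.2 y (s.2 y + 1)) x (s.2 x + 1) =
      Function.update (Function.update s.2 x (s.2 x + 1)) y (s.2 y + 1)
    exact Function.update_comm (Ne.symm hxy) _ _ _

lemma unstable_toppleSeq_of_not_mem {x : Site d} {α : List (Site d)} (hx : x ∉ α)
    {s : Config d × Odom d} (hu : Unstable s.1 x) : Unstable (toppleSeq I α s).1 x := by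
  induction α generalizing s with
  | nil => exact hu
  | cons y α' ih =>
    have hyx : y ≠ x := fun e => hx (e ▸ List.mem_cons_self (a := y) (l := α'))
    exact ih (fun h => hx (List.mem_cons_of_mem _ h)) (unstable_topple hyx hu)

lemma topple_toppleSeq_comm {x : Site d} {γ : List (Site d)} (hγ : x ∉ γ)
    {s : Config d × Odom d} (hu : Unstable s.1 x) (hγa : AcceptableSeq I γ s) :
    topple I x (toppleSeq I γ s) = toppleSeq I γ (topple I x s) := by
  induction γ generalizing s with
  | nil => rfl
  | cons y γ' ih =>
    cases hγa with
    | cons hy hγ' =>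
      have hyx : y ≠ x := fun e => hγ (e ▸ List.mem_cons_self (a := y) (l := γ'))
      have htl : x ∉ γ' := fun h => hγ (List.mem_cons_of_mem _ h)
      show topple I x (toppleSeq I γ' (topple I y s)) =
        toppleSeq I γ' (topple I y (topple I x s))
      rw [ih htl (unstable_topple hyx hu) hγ',
        topple_comm (Ne.symm hyx) (unstable_ne_zero hu) hy]

lemma acceptable_topple_of_not_mem {x : Site d} {γ : List (Site d)} (hγ : x ∉ γ)
    {s : Config d × Odom d} (hu : Unstable s.1 x) (ha : AcceptableSeq I γ s) :
    AcceptableSeq I γ (topple I x s) := by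
  induction γ generalizing s with
  | nil => exact .nil _
  | cons y γ' ih =>
    cases ha with
    | cons hy hγ' =>
      have hyx : y ≠ x := fun e => hγ (e ▸ List.mem_cons_self (a := y) (l := γ'))
      have htl : x ∉ γ' := fun h => hγ (List.mem_cons_of_mem _ h)
      refine .cons (ne_zero_topple (Ne.symm hyx) hy) ?_
      show AcceptableSeq I γ' (topple I y (topple I x s))
      rw [← topple_comm (Ne.symm hyx) (unstable_ne_zero hu) hy]
      exact ih htl (unstable_topple hyx hu) hγ'

lemma acceptableSeq_append {l₁ l₂ : List (Site d)} {s : Config d × Odom d} :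
    AcceptableSeq I (l₁ ++ l₂) s ↔
      AcceptableSeq I l₁ s ∧ AcceptableSeq I l₂ (toppleSeq I l₁ s) := by
  induction l₁ generalizing s with
  | nil => simp only [List.nil_append]; exact ⟨fun h => ⟨.nil _, h⟩, fun h => h.2⟩
  | cons a l ih =>
    constructor
    · intro h
      cases h with
      | cons ha htl =>
        obtain ⟨h1, h2⟩ := ih.mp htl
        exact ⟨.cons ha h1, h2⟩
    · rintro ⟨h1, h2⟩
      cases h1 with
      | cons ha h1' => exact .cons ha (ih.mpr ⟨h1', h2⟩)

lemma exists_first_split {b : Site d} {α : List (Site d)} (h : b ∈ α) :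
    ∃ γ δ, α = γ ++ b :: δ ∧ b ∉ γ := by
  induction α with
  | nil => cases h
  | cons a α' ih =>
    by_cases hab : a = b
    · exact ⟨[], α', by rw [hab]; rfl, List.not_mem_nil (a := b)⟩
    · have : b ∈ α' := by
        rcases List.mem_cons.mp h with h' | h'
        · exact absurd h'.symm hab
        · exact h'
      obtain ⟨γ, δ, rfl, hγ⟩ := ih this
      exact ⟨a :: γ, δ, rfl, by
        intro hb
        rcases List.mem_cons.mp hb with h' | h'
        · exact hab h'.symm
        · exact hγ h'⟩

lemma count_le_of_acceptable_stabilizes {V : Set (Site d)} :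
    ∀ {β : List (Site d)} {s : Config d × Odom d}, (∀ y ∈ β, y ∈ V) → LegalSeq I β s →
      ∀ {α : List (Site d)}, AcceptableSeq I α s → StableIn (toppleSeq I α s).1 V →
      ∀ x, β.count x ≤ α.count x := by
  intro β
  induction β with
  | nil => intro s _ _ α _ _ x; exact Nat.zero_le _
  | cons b β' ih =>
    intro s hmem hleg α hacc hstab x
    cases hleg with
    | cons hb hβ' =>
      have hbV : b ∈ V := hmem b (List.mem_cons_self (a := b) (l := β'))
      have hbα : b ∈ α := by
        by_contra hb'
        exact hstab b hbV (unstable_toppleSeq_of_not_mem hb' hb)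
      obtain ⟨γ, δ, rfl, hbγ⟩ := exists_first_split hbα
      obtain ⟨hγ, hrest⟩ := acceptableSeq_append.mp hacc
      cases hrest with
      | cons hbA hδ =>
        have hcomm : topple I b (toppleSeq I γ s) = toppleSeq I γ (topple I b s) :=
          topple_toppleSeq_comm hbγ hb hγ
        have hγ' : AcceptableSeq I γ (topple I b s) :=
          acceptable_topple_of_not_mem hbγ hb hγ
        have hδ' : AcceptableSeq I δ (toppleSeq I γ (topple I b s)) := by
          rw [← hcomm]; exact hδ
        have hacc₂ : AcceptableSeq I (γ ++ δ) (topple I b s) :=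
          acceptableSeq_append.mpr ⟨hγ', hδ'⟩
        have hfinal : toppleSeq I (γ ++ δ) (topple I b s) =
            toppleSeq I (γ ++ b :: δ) s := by
          rw [toppleSeq_append, toppleSeq_append]
          show toppleSeq I δ (toppleSeq I γ (topple I b s)) =
            toppleSeq I δ (topple I b (toppleSeq I γ s))
          rw [hcomm]
        have hstab₂ : StableIn (toppleSeq I (γ ++ δ) (topple I b s)).1 V := by
          rw [hfinal]; exact hstab
        have hIH := ih (fun y hy => hmem y (List.mem_cons_of_mem _ hy)) hβ' hacc₂ hstab₂ x
        simp only [List.count_cons, List.count_append] at hIH ⊢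
        omega

end LAP

/-- **Least Action Principle**: if `α` is an acceptable sequence of topplings that
stabilizes `(η,h)` in `V`, then `m_{V,η,h} ≤ m_α`. -/
theorem least_action_principle {d : ℕ} (I : InstrField d) (V : Set (Site d))
    (η : Config d) (h : Odom d) (α : List (Site d))
    (hα : AcceptableSeq I α (η, h))
    (hstab : StableIn (toppleSeq I α (η, h)).1 V) :
    ∀ x : Site d, mV I V η h x ≤ (α.count x : ℕ∞) := by
  intro x
  refine iSup_le fun β => iSup_le fun hβ => ?_
  exact_mod_cast count_le_of_acceptable_stabilizes hβ.1 hβ.2 hα hstab x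

end ARW
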